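/- Let N ≥ 1, let K : ℝ^N → ℝ^N be continuously differentiable, and let u : ℝ → ℝ^N satisfy, for all t ≥ 0, u'(t) = −(D K(u(t)))ᵀ (K(u(t))), where D K(x) is the derivative of K at x viewed as an N×N matrix and ᵀ is the transpose. Suppose u(t) converges as t → +∞ to a point u∞, and suppose there is a vector ρ ∈ ℝ^N with all coordinates positive such that every x ∈ ℝ^N with (D K(u∞))ᵀ.mulVec x = 0 satisfies x = t • ρ for some t ∈ ℝ. Then there exists λ ∈ ℝ with K(u∞) = λ • ρ. -/

import Mathlib

set_option maxHeartbeats 1000000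


/-- If the fourth-order combinatorial Cooper–Rivin curvature flow `u' = -(DK(u))ᵀ K(u)`
exists for all `t ≥ 0` and converges to `u∞`, and the kernel of `(DK(u∞))ᵀ` is contained
in the span of a vector `ρ` with positive coordinates (the limiting sphere packing
metric), then `K(u∞) = λ • ρ` for some `λ`: the limit is a discrete quasi-Einstein
metric.  Here the transpose of the Jacobian matrix `DK(x)` is the adjoint of the Fréchet
derivative of `K` at `x` with respect to the Euclidean inner product. -/
theorem stmt_16 {N : ℕ} (hN : 1 ≤ N)
    (K : EuclideanSpace ℝ (Fin N) → EuclideanSpace ℝ (Fin N)) (hK : ContDiff ℝ 1 K)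
    (u : ℝ → EuclideanSpace ℝ (Fin N))
    (hu : ∀ t : ℝ, 0 ≤ t →
      HasDerivAt u (-(ContinuousLinearMap.adjoint (fderiv ℝ K (u t)) (K (u t)))) t)
    (uinf : EuclideanSpace ℝ (Fin N))
    (hconv : Filter.Tendsto u Filter.atTop (nhds uinf))
    (ρ : EuclideanSpace ℝ (Fin N)) (hρ : ∀ i, 0 < ρ i)
    (hker : ∀ x : EuclideanSpace ℝ (Fin N),
      ContinuousLinearMap.adjoint (fderiv ℝ K uinf) x = 0 → ∃ t : ℝ, x = t • ρ) :
    ∃ lam : ℝ, K uinf = lam • ρ := by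
  set F : EuclideanSpace ℝ (Fin N) → EuclideanSpace ℝ (Fin N) :=
    fun x => ContinuousLinearMap.adjoint (fderiv ℝ K x) (K x) with hF
  have hFcont : Continuous F := by
    apply Continuous.clm_apply
    · exact (ContinuousLinearMap.adjoint : (EuclideanSpace ℝ (Fin N) →L[ℝ]
        EuclideanSpace ℝ (Fin N)) ≃ₗᵢ[ℝ] _).continuous.comp
        (hK.continuous_fderiv one_ne_zero)
    · exact hK.continuous
  set c : EuclideanSpace ℝ (Fin N) := F uinf with hc
  have hFu : Filter.Tendsto (fun t => F (u t)) Filter.atTop (nhds c) :=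
    (hFcont.tendsto uinf).comp hconv
  -- Main step: c = 0
  have hc0 : c = 0 := by
    by_contra hne
    have hcpos : 0 < ‖c‖ / 3 := div_pos (norm_pos_iff.2 hne) (by norm_num)
    obtain ⟨T₁, hT₁⟩ := (Metric.tendsto_atTop.1 hFu) (‖c‖ / 3) hcpos
    obtain ⟨T₂, hT₂⟩ := (Metric.tendsto_atTop.1 hconv) (‖c‖ / 3 / 2) (by positivity)
    set T : ℝ := max 0 (max T₁ T₂) with hT
    have hT0 : (0:ℝ) ≤ T := le_max_left _ _
    have hTT₁ : T₁ ≤ T := le_trans (le_max_left _ _) (le_max_right _ _)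
    have hTT₂ : T₂ ≤ T := le_trans (le_max_right _ _) (le_max_right _ _)
    -- w t = u t + t • c has derivative -F(u t) + c, of norm ≤ ‖c‖/3 on [T,∞)
    have hsc : ∀ x : ℝ, HasDerivAt (fun t : ℝ => t • c) c x := fun x => by
      simpa using (hasDerivAt_id x).smul_const c
    have hderiv : ∀ x ∈ Set.Ici T, HasDerivWithinAt (fun t => u t + t • c)
        ((fun t => -(F (u t)) + c) x) (Set.Ici T) x := fun x hx =>
      ((hu x (hT0.trans hx)).add (hsc x)).hasDerivWithinAt
    have key : ‖(fun t => u t + t • c) (T + 1) - (fun t => u t + t • c) T‖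
        ≤ (‖c‖ / 3) * ‖(T + 1) - T‖ := by
      refine Convex.norm_image_sub_le_of_norm_hasDerivWithin_le hderiv ?_ (convex_Ici T)
        Set.self_mem_Ici (Set.mem_Ici.2 (by linarith))
      intro x hx
      have := hT₁ x (hTT₁.trans hx)
      rw [dist_eq_norm] at this
      calc ‖-(F (u x)) + c‖ = ‖F (u x) - c‖ := by rw [← norm_neg]; congr 1; abel
      _ ≤ ‖c‖ / 3 := this.le
    have hsimp : (fun t => u t + t • c) (T + 1) - (fun t => u t + t • c) T
        = (u (T + 1) - u T) + c := by
      simp only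
      module
    rw [hsimp] at key
    have hd1 : ‖u (T + 1) - u T‖ ≤ ‖c‖ / 3 := by
      have h1 := hT₂ (T + 1) (by linarith)
      have h2 := hT₂ T hTT₂
      rw [dist_eq_norm] at h1 h2
      calc ‖u (T + 1) - u T‖ = ‖(u (T + 1) - uinf) - (u T - uinf)‖ := by abel_nf
      _ ≤ ‖u (T + 1) - uinf‖ + ‖u T - uinf‖ := norm_sub_le _ _
      _ ≤ ‖c‖ / 3 / 2 + ‖c‖ / 3 / 2 := by exact add_le_add h1.le h2.le
      _ = ‖c‖ / 3 := by ring
    have hle : ‖c‖ ≤ ‖u (T + 1) - u T‖ + ‖(u (T + 1) - u T) + c‖ := by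
      calc ‖c‖ = ‖-(u (T + 1) - u T) + ((u (T + 1) - u T) + c)‖ := by congr 1; abel
      _ ≤ ‖-(u (T + 1) - u T)‖ + ‖(u (T + 1) - u T) + c‖ := norm_add_le _ _
      _ = ‖u (T + 1) - u T‖ + ‖(u (T + 1) - u T) + c‖ := by rw [norm_neg]
    have hnorm1 : ‖(T + 1) - T‖ = 1 := by norm_num
    rw [hnorm1, mul_one] at key
    have : ‖c‖ ≤ ‖c‖ / 3 + ‖c‖ / 3 := le_trans hle (add_le_add hd1 key)
    have : ‖c‖ ≤ 0 := by linarith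
    exact hne (norm_le_zero_iff.1 this)
  obtain ⟨t, ht⟩ := hker (K uinf) hc0
  exact ⟨t, ht⟩
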